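/- Let M be a subgroup of the unit group U_K, and let F′ ⊆ K denote the field of fractions of the ring R_{K,M} (the subfield of K generated by R_{K,M}). Then {x ∈ O_K : there exist y, z ∈ R_{K,M} with y ≠ 0 and x·y = z} equals O_K ∩ F′, the full ring of integers of F′. -/

import Mathlib

noncomputable section

/-- A fixed algebraic closure of `ℚ`. -/
abbrev Qbar : Type := AlgebraicClosure ℚ

/-- The ring of integers of a subfield `K` of `ℚ̄`, viewed as a subset of `ℚ̄`. -/
def ringOfInt (K : IntermediateField ℚ Qbar) : Set Qbar :=
  {x | x ∈ K ∧ IsIntegral ℤ x}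

/-- `R_{K,M}` for a multiplicative submonoid `M ⊆ O_K`. -/
def RKM (K : IntermediateField ℚ Qbar) (M : Set Qbar) : Set Qbar :=
  {x | x ∈ ringOfInt K ∧ ∀ ε ∈ M, ∃ δ ∈ M, ∃ w ∈ ringOfInt K,
    δ - 1 = (ε - 1) * x + (ε - 1) ^ 2 * w}

namespace Aux

variable {K : IntermediateField ℚ Qbar} {M : Set Qbar}

lemma O_zero : (0 : Qbar) ∈ ringOfInt K := ⟨zero_mem K, isIntegral_zero⟩
lemma O_one : (1 : Qbar) ∈ ringOfInt K := ⟨one_mem K, isIntegral_one⟩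
lemma O_add {a b : Qbar} (ha : a ∈ ringOfInt K) (hb : b ∈ ringOfInt K) :
    a + b ∈ ringOfInt K := ⟨add_mem ha.1 hb.1, ha.2.add hb.2⟩
lemma O_mul {a b : Qbar} (ha : a ∈ ringOfInt K) (hb : b ∈ ringOfInt K) :
    a * b ∈ ringOfInt K := ⟨mul_mem ha.1 hb.1, ha.2.mul hb.2⟩
lemma O_neg {a : Qbar} (ha : a ∈ ringOfInt K) : -a ∈ ringOfInt K :=
  ⟨neg_mem ha.1, ha.2.neg⟩
lemma O_sub {a b : Qbar} (ha : a ∈ ringOfInt K) (hb : b ∈ ringOfInt K) :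
    a - b ∈ ringOfInt K := by
  rw [sub_eq_add_neg]; exact O_add ha (O_neg hb)
lemma O_sq {a : Qbar} (ha : a ∈ ringOfInt K) : a ^ 2 ∈ ringOfInt K := by
  rw [sq]; exact O_mul ha ha

lemma R_zero (hM1 : (1 : Qbar) ∈ M) : (0 : Qbar) ∈ RKM K M :=
  ⟨O_zero, fun _ _ => ⟨1, hM1, 0, O_zero, by ring⟩⟩

lemma R_one : (1 : Qbar) ∈ RKM K M :=
  ⟨O_one, fun ε hε => ⟨ε, hε, 0, O_zero, by ring⟩⟩

lemma R_add (hMO : M ⊆ ringOfInt K) (hMmul : ∀ a ∈ M, ∀ b ∈ M, a * b ∈ M)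
    {a b : Qbar} (ha : a ∈ RKM K M) (hb : b ∈ RKM K M) :
    a + b ∈ RKM K M := by
  refine ⟨O_add ha.1 hb.1, fun ε hε => ?_⟩
  obtain ⟨δ₁, hδ₁, w₁, hw₁, h1⟩ := ha.2 ε hε
  obtain ⟨δ₂, hδ₂, w₂, hw₂, h2⟩ := hb.2 ε hε
  have hεO := hMO hε
  refine ⟨δ₁ * δ₂, hMmul _ hδ₁ _ hδ₂,
    w₁ + w₂ + (a + (ε - 1) * w₁) * (b + (ε - 1) * w₂),
    O_add (O_add hw₁ hw₂)
      (O_mul (O_add ha.1 (O_mul (O_sub hεO O_one) hw₁))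
        (O_add hb.1 (O_mul (O_sub hεO O_one) hw₂))), ?_⟩
  rw [eq_add_of_sub_eq h1, eq_add_of_sub_eq h2]; ring

lemma R_mul (hMO : M ⊆ ringOfInt K)
    {a b : Qbar} (ha : a ∈ RKM K M) (hb : b ∈ RKM K M) :
    a * b ∈ RKM K M := by
  refine ⟨O_mul ha.1 hb.1, fun ε hε => ?_⟩
  obtain ⟨δ₁, hδ₁, w₁, hw₁, h1⟩ := ha.2 ε hε
  obtain ⟨δ, hδ, w₂, hw₂, h2⟩ := hb.2 δ₁ hδ₁
  have hεO := hMO hε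
  refine ⟨δ, hδ, w₁ * b + (a + (ε - 1) * w₁) ^ 2 * w₂,
    O_add (O_mul hw₁ hb.1)
      (O_mul (O_sq (O_add ha.1 (O_mul (O_sub hεO O_one) hw₁))) hw₂), ?_⟩
  rw [eq_add_of_sub_eq h2, eq_add_of_sub_eq h1]; ring

lemma R_neg (hMO : M ⊆ ringOfInt K) (hMinv : ∀ ε ∈ M, ∃ ε' ∈ M, ε * ε' = 1)
    {a : Qbar} (ha : a ∈ RKM K M) : -a ∈ RKM K M := by
  refine ⟨O_neg ha.1, fun ε hε => ?_⟩
  obtain ⟨δ, hδ, w, hw, h1⟩ := ha.2 ε hε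
  obtain ⟨δ', hδ', hδδ'⟩ := hMinv δ hδ
  have hεO := hMO hε
  refine ⟨δ', hδ', -w + (a + (ε - 1) * w) ^ 2 * δ',
    O_add (O_neg hw)
      (O_mul (O_sq (O_add ha.1 (O_mul (O_sub hεO O_one) hw))) (hMO hδ')), ?_⟩
  have hδeq : δ = (ε - 1) * a + (ε - 1) ^ 2 * w + 1 := by linear_combination h1
  subst hδeq
  linear_combination (1 - ((ε - 1) * a + (ε - 1) ^ 2 * w)) * hδδ'

lemma R_natCast (hMO : M ⊆ ringOfInt K) (hM1 : (1 : Qbar) ∈ M)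
    (hMmul : ∀ a ∈ M, ∀ b ∈ M, a * b ∈ M) (n : ℕ) : (n : Qbar) ∈ RKM K M := by
  induction n with
  | zero => exact_mod_cast R_zero hM1
  | succ k ih => push_cast; exact R_add hMO hMmul ih R_one

lemma R_intCast (hMO : M ⊆ ringOfInt K) (hM1 : (1 : Qbar) ∈ M)
    (hMmul : ∀ a ∈ M, ∀ b ∈ M, a * b ∈ M)
    (hMinv : ∀ ε ∈ M, ∃ ε' ∈ M, ε * ε' = 1) (n : ℤ) : (n : Qbar) ∈ RKM K M := by
  rcases n with m | m
  · exact_mod_cast R_natCast hMO hM1 hMmul m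
  · have := R_neg hMO hMinv (R_natCast hMO hM1 hMmul (m + 1))
    push_cast at this ⊢
    exact this

end Aux

open IntermediateField

/-- `M` is a subgroup of the unit group `U_K` of `O_K`. -/
theorem stmt2 (K : IntermediateField ℚ Qbar) (M : Set Qbar)
    (hMO : M ⊆ ringOfInt K) (hM1 : (1 : Qbar) ∈ M)
    (hMmul : ∀ a ∈ M, ∀ b ∈ M, a * b ∈ M)
    (hMinv : ∀ ε ∈ M, ∃ ε' ∈ M, ε * ε' = 1) :
    {x | x ∈ ringOfInt K ∧ ∃ y ∈ RKM K M, ∃ z ∈ RKM K M, y ≠ 0 ∧ x * y = z}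
      = ringOfInt K ∩ ↑(IntermediateField.adjoin ℚ (RKM K M)) := by
  ext x
  simp only [Set.mem_setOf_eq, Set.mem_inter_iff, SetLike.mem_coe]
  constructor
  · rintro ⟨hx, y, hy, z, hz, hy0, hxy⟩
    refine ⟨hx, ?_⟩
    have hyA : y ∈ adjoin ℚ (RKM K M) := subset_adjoin _ _ hy
    have hzA : z ∈ adjoin ℚ (RKM K M) := subset_adjoin _ _ hz
    have hx' : x = z * y⁻¹ := by
      field_simp
      exact hxy
    rw [hx']
    exact mul_mem hzA (inv_mem hyA)
  · rintro ⟨hx, hxA⟩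
    refine ⟨hx, ?_⟩
    clear hx
    induction hxA using IntermediateField.adjoin_induction with
    | mem t ht => exact ⟨1, Aux.R_one, t, ht, one_ne_zero, mul_one t⟩
    | algebraMap q =>
      refine ⟨(q.den : Qbar), Aux.R_natCast hMO hM1 hMmul q.den,
        (q.num : Qbar), Aux.R_intCast hMO hM1 hMmul hMinv q.num, ?_, ?_⟩
      · exact_mod_cast q.den_ne_zero
      · have hq : q * (q.den : ℚ) = (q.num : ℚ) := by
          exact q.mul_den_eq_num
        have h1 : algebraMap ℚ Qbar q * algebraMap ℚ Qbar (q.den : ℚ)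
            = algebraMap ℚ Qbar ((q.num : ℤ) : ℚ) := by rw [← map_mul, hq]
        rw [map_natCast, map_intCast] at h1
        exact h1
    | add t s _ _ ht hs =>
      obtain ⟨y₁, hy₁, z₁, hz₁, h0₁, he₁⟩ := ht
      obtain ⟨y₂, hy₂, z₂, hz₂, h0₂, he₂⟩ := hs
      exact ⟨y₁ * y₂, Aux.R_mul hMO hy₁ hy₂,
        z₁ * y₂ + z₂ * y₁,
        Aux.R_add hMO hMmul (Aux.R_mul hMO hz₁ hy₂) (Aux.R_mul hMO hz₂ hy₁),
        mul_ne_zero h0₁ h0₂, by linear_combination y₂ * he₁ + y₁ * he₂⟩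
    | inv t _ ht =>
      obtain ⟨y, hy, z, hz, h0, he⟩ := ht
      rcases eq_or_ne t 0 with rfl | htne
      · exact ⟨1, Aux.R_one, 0, Aux.R_zero hM1, one_ne_zero, by simp⟩
      · have hz0 : z ≠ 0 := by
          rw [← he]; exact mul_ne_zero htne h0
        exact ⟨z, hz, y, hy, hz0, by rw [← he, inv_mul_cancel_left₀ htne]⟩
    | mul t s _ _ ht hs =>
      obtain ⟨y₁, hy₁, z₁, hz₁, h0₁, he₁⟩ := ht
      obtain ⟨y₂, hy₂, z₂, hz₂, h0₂, he₂⟩ := hs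
      exact ⟨y₁ * y₂, Aux.R_mul hMO hy₁ hy₂, z₁ * z₂,
        Aux.R_mul hMO hz₁ hz₂, mul_ne_zero h0₁ h0₂,
        by linear_combination y₂ * s * he₁ + z₁ * he₂⟩
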